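/- Let L be an n×n CB matrix and K a field. Then the Cyc sequence of L is a chain complex of free K[x]-modules; that is, ∂_{k−1} ∘ ∂_k = 0 for every k with 2 ≤ k ≤ n−1. -/

import Mathlib

open MvPolynomial Finset

/-- A critical binomial (CB) matrix. -/
def IsCB (n : ℕ) (L : Matrix (Fin n) (Fin n) ℤ) : Prop :=
  (∀ i, 0 < L i i) ∧ (∀ i j : Fin n, i ≠ j → L i j ≤ 0) ∧ (∀ i, ∑ j, L i j = 0) ∧
    (∀ j, ∃ i, i ≠ j ∧ L i j ≠ 0)

/-- Cyclically ordered partitions of `{0,…,n-1}` into `k+1` nonempty (ordered) blocks,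
normalized so that the last vertex lies in the last block: encoded as surjections
`b : Fin n → Fin (k+1)` sending the last vertex to the last block; the blocks are the
fibers `I_s = b⁻¹(s)`. -/
def CycB (n k : ℕ) : Type :=
  {b : Fin n → Fin (k + 1) //
    Function.Surjective b ∧ ∀ h : n - 1 < n, b ⟨n - 1, h⟩ = Fin.last k}

/-- The `s`-th block of a cyclically ordered partition. -/
def block {n k : ℕ} (b : CycB n k) (s : Fin (k + 1)) : Finset (Fin n) :=
  Finset.univ.filter fun i => b.1 i = s

/-- The monomial `x^{S → T} = ∏_{i ∈ S} xᵢ^{Σ_{j ∈ T} a i j}`, where `a i j = -L i j`. -/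
noncomputable def xArrow (K : Type*) [Field K] {n : ℕ} (L : Matrix (Fin n) (Fin n) ℤ)
    (S T : Finset (Fin n)) : MvPolynomial (Fin n) K :=
  ∏ i ∈ S, X i ^ (∑ j ∈ T, (-L i j).toNat)

/-- The map `Fin (k+2) → Fin (k+1)` collapsing the adjacent indices `s` and `s+1`. -/
def collapseAt {k : ℕ} (s : Fin (k + 1)) (t : Fin (k + 2)) : Fin (k + 1) :=
  if h : t.val ≤ s.val then ⟨t.val, lt_of_le_of_lt h s.isLt⟩
  else ⟨t.val - 1, by have := t.isLt; omega⟩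

lemma collapseAt_surjective {k : ℕ} (s : Fin (k + 1)) :
    Function.Surjective (collapseAt s) := by
  intro u
  by_cases h : u.val ≤ s.val
  · exact ⟨⟨u.val, by have := u.isLt; omega⟩, by simp [collapseAt, h]⟩
  · refine ⟨⟨u.val + 1, by have := u.isLt; omega⟩, ?_⟩
    simp only [collapseAt]
    rw [dif_neg (by omega)]
    simp

/-- The map `Fin (k+2) → Fin (k+1)` collapsing the first and last indices (cyclically)
into the last index, shifting the others down by one. -/
def collapseCyc {k : ℕ} (t : Fin (k + 2)) : Fin (k + 1) :=
  if t.val = 0 ∨ t.val = k + 1 then Fin.last k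
  else ⟨t.val - 1, by have := t.isLt; omega⟩

lemma collapseCyc_surjective {k : ℕ} : Function.Surjective (collapseCyc (k := k)) := by
  intro u
  by_cases h : u = Fin.last k
  · exact ⟨0, by simp [collapseCyc, h]⟩
  · have hu : u.val < k := by
      have := u.isLt
      rcases lt_or_eq_of_le (Nat.lt_succ_iff.mp this) with h' | h'
      · exact h'
      · exact absurd (Fin.ext h') h
    refine ⟨⟨u.val + 1, by omega⟩, ?_⟩
    simp only [collapseCyc]
    rw [if_neg (by omega)]
    simp

/-- Merging blocks `s` and `s+1` of a cyclically ordered partition with `k+2` blocks. -/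
def mergeAdj {n k : ℕ} (b : CycB n (k + 1)) (s : Fin (k + 1)) : CycB n k :=
  ⟨collapseAt s ∘ b.1, (collapseAt_surjective s).comp b.2.1, by
    intro h
    have hb := b.2.2 h
    have hs := s.isLt
    simp only [Function.comp_apply, hb]
    unfold collapseAt
    rw [dif_neg (by simp only [Fin.val_last]; omega)]
    ext
    simp⟩

/-- Merging the first and last blocks of a cyclically ordered partition with `k+2`
blocks, cyclically. -/
def mergeCyc {n k : ℕ} (b : CycB n (k + 1)) : CycB n k :=
  ⟨collapseCyc ∘ b.1, collapseCyc_surjective.comp b.2.1, by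
    intro h
    have hb := b.2.2 h
    simp only [Function.comp_apply, hb]
    simp [collapseCyc, Fin.last]⟩

/-- The image under the differential of a single basis element `(I₁,…,I_{k+2})`:
`∑ₛ (-1)^{s-1} x^{I_s→I_{s+1}} (I₁,…,I_s ∪ I_{s+1},…,I_{k+2})
  - x^{I_{k+2}→I₁} (I₂,…,I_{k+1},I₁ ∪ I_{k+2})`. -/
noncomputable def diffSingle (K : Type*) [Field K] {n : ℕ} (L : Matrix (Fin n) (Fin n) ℤ)
    {k : ℕ} (b : CycB n (k + 1)) : CycB n k →₀ MvPolynomial (Fin n) K :=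
  (∑ s : Fin (k + 1),
      Finsupp.single (mergeAdj b s)
        ((-1 : MvPolynomial (Fin n) K) ^ (s : ℕ) *
          xArrow K L (block b s.castSucc) (block b s.succ)))
    - Finsupp.single (mergeCyc b)
        (xArrow K L (block b (Fin.last (k + 1))) (block b 0))

/-- The differential `∂_{k+1} : 𝒞_{k+1} → 𝒞_k` of the Cyc complex. -/
noncomputable def cycDiff (K : Type*) [Field K] {n : ℕ} (L : Matrix (Fin n) (Fin n) ℤ)
    (k : ℕ) :
    (CycB n (k + 1) →₀ MvPolynomial (Fin n) K) →ₗ[MvPolynomial (Fin n) K]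
      (CycB n k →₀ MvPolynomial (Fin n) K) :=
  Finsupp.lsum (MvPolynomial (Fin n) K) fun b =>
    LinearMap.toSpanSingleton (MvPolynomial (Fin n) K) _ (diffSingle K L b)

section Aux

variable (K : Type*) [Field K] {n : ℕ} (L : Matrix (Fin n) (Fin n) ℤ)

lemma xArrow_union_left {S S' T : Finset (Fin n)} (h : Disjoint S S') :
    xArrow K L (S ∪ S') T = xArrow K L S T * xArrow K L S' T :=
  Finset.prod_union h

lemma xArrow_union_right {S T T' : Finset (Fin n)} (h : Disjoint T T') :
    xArrow K L S (T ∪ T') = xArrow K L S T * xArrow K L S T' := by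
  unfold xArrow
  rw [← Finset.prod_mul_distrib]
  exact Finset.prod_congr rfl fun i _ => by rw [Finset.sum_union h, pow_add]

lemma block_disjoint {k : ℕ} (b : CycB n k) {t₁ t₂ : Fin (k+1)} (h : t₁ ≠ t₂) :
    Disjoint (block b t₁) (block b t₂) := by
  rw [Finset.disjoint_left]
  intro i h1 h2
  simp only [block, Finset.mem_filter] at h1 h2
  exact h (h1.2.symm.trans h2.2)

lemma collapseAt_eq_iff {k : ℕ} (s u : Fin (k+1)) (v : Fin (k+2)) :
    collapseAt s v = u ↔
      (v.val = u.val ∧ u.val ≤ s.val) ∨ (v.val = u.val + 1 ∧ s.val ≤ u.val) := by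
  unfold collapseAt
  split_ifs with h <;> simp [Fin.ext_iff] <;> omega

lemma collapseCyc_eq_iff {k : ℕ} (u : Fin (k+1)) (v : Fin (k+2)) :
    collapseCyc v = u ↔ (v.val = 0 ∧ u.val = k) ∨ v.val = u.val + 1 := by
  unfold collapseCyc
  have := v.isLt
  have := u.isLt
  split_ifs with h <;> grind [Fin.ext_iff]

lemma block_mergeAdj_single {k : ℕ} (b : CycB n (k+1)) (s : Fin (k+1)) (u : Fin (k+1))
    (t : Fin (k+2)) (h : ∀ v : Fin (k+2), collapseAt s v = u ↔ v = t) :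
    block (mergeAdj b s) u = block b t := by
  ext i
  simp only [block, mergeAdj, Function.comp, Finset.mem_filter, Finset.mem_univ, true_and]
  exact Finset.mem_filter.trans ((and_iff_right (Finset.mem_univ _)).trans (h (b.1 i)))

lemma block_mergeAdj_pair {k : ℕ} (b : CycB n (k+1)) (s : Fin (k+1)) (u : Fin (k+1))
    (t₁ t₂ : Fin (k+2)) (h : ∀ v : Fin (k+2), collapseAt s v = u ↔ v = t₁ ∨ v = t₂) :
    block (mergeAdj b s) u = block b t₁ ∪ block b t₂ := by
  ext i
  simp only [block, mergeAdj, Function.comp, Finset.mem_filter, Finset.mem_union,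
    Finset.mem_univ, true_and]
  exact Finset.mem_filter.trans ((and_iff_right (Finset.mem_univ _)).trans (h (b.1 i)))

lemma block_mergeCyc_single {k : ℕ} (b : CycB n (k+1)) (u : Fin (k+1))
    (t : Fin (k+2)) (h : ∀ v : Fin (k+2), collapseCyc v = u ↔ v = t) :
    block (mergeCyc b) u = block b t := by
  ext i
  simp only [block, mergeCyc, Function.comp, Finset.mem_filter, Finset.mem_univ, true_and]
  exact Finset.mem_filter.trans ((and_iff_right (Finset.mem_univ _)).trans (h (b.1 i)))

lemma block_mergeCyc_pair {k : ℕ} (b : CycB n (k+1)) (u : Fin (k+1))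
    (t₁ t₂ : Fin (k+2)) (h : ∀ v : Fin (k+2), collapseCyc v = u ↔ v = t₁ ∨ v = t₂) :
    block (mergeCyc b) u = block b t₁ ∪ block b t₂ := by
  ext i
  simp only [block, mergeCyc, Function.comp, Finset.mem_filter, Finset.mem_union,
    Finset.mem_univ, true_and]
  exact Finset.mem_filter.trans ((and_iff_right (Finset.mem_univ _)).trans (h (b.1 i)))

end Aux

section Aux2

variable (K : Type*) [Field K] {n : ℕ} (L : Matrix (Fin n) (Fin n) ℤ)

lemma collapseAt_val {k : ℕ} (s : Fin (k+1)) (v : Fin (k+2)) :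
    (collapseAt s v).val = if v.val ≤ s.val then v.val else v.val - 1 := by
  unfold collapseAt; split_ifs <;> rfl

lemma collapseCyc_val {k : ℕ} (v : Fin (k+2)) :
    (collapseCyc v).val = if v.val = 0 ∨ v.val = k + 1 then k else v.val - 1 := by
  unfold collapseCyc; split_ifs <;> rfl

lemma mergeAdj_mergeAdj {m : ℕ} (b : CycB n (m+2)) (s : Fin (m+2)) (t : Fin (m+1))
    (h : t.val < s.val) :
    mergeAdj (mergeAdj b s) t =
      mergeAdj (mergeAdj b ⟨t.val, by have := t.isLt; omega⟩)
        ⟨s.val - 1, by have := s.isLt; omega⟩ := by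
  apply Subtype.ext
  funext i
  show collapseAt t (collapseAt s (b.1 i)) = collapseAt _ (collapseAt _ (b.1 i))
  generalize b.1 i = v
  have h1 := v.isLt
  have h2 := s.isLt
  have h3 := t.isLt
  rw [Fin.ext_iff]
  simp only [collapseAt_val, Fin.val_mk]
  split_ifs <;> omega

lemma mergeCyc_mergeAdj {m : ℕ} (b : CycB n (m+2)) (s : Fin (m+2)) (h : 1 ≤ s.val) :
    mergeCyc (mergeAdj b s) =
      mergeAdj (mergeCyc b) ⟨s.val - 1, by have := s.isLt; omega⟩ := by
  apply Subtype.ext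
  funext i
  show collapseCyc (collapseAt s (b.1 i)) = collapseAt _ (collapseCyc (b.1 i))
  generalize b.1 i = v
  have h1 := v.isLt
  have h2 := s.isLt
  rw [Fin.ext_iff]
  simp only [collapseAt_val, collapseCyc_val, Fin.val_mk]
  split_ifs <;> omega

lemma mergeCyc_mergeAdj_zero {m : ℕ} (b : CycB n (m+2)) :
    mergeCyc (mergeAdj b (0 : Fin (m+2))) = mergeCyc (mergeCyc b) := by
  apply Subtype.ext
  funext i
  show collapseCyc (collapseAt 0 (b.1 i)) = collapseCyc (collapseCyc (b.1 i))
  generalize b.1 i = v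
  have h1 := v.isLt
  rw [Fin.ext_iff]
  simp only [collapseAt_val, collapseCyc_val, Fin.val_mk, Fin.val_zero]
  grind

end Aux2

section Aux3

variable (K : Type*) [Field K] {n : ℕ} (L : Matrix (Fin n) (Fin n) ℤ)

/-- Coefficient of the adjacent-merge term. -/
noncomputable def coefA {k : ℕ} (b : CycB n (k + 1)) (s : Fin (k + 1)) :
    MvPolynomial (Fin n) K :=
  (-1 : MvPolynomial (Fin n) K) ^ (s : ℕ) * xArrow K L (block b s.castSucc) (block b s.succ)

/-- Coefficient of the cyclic-merge term. -/
noncomputable def coefC {k : ℕ} (b : CycB n (k + 1)) : MvPolynomial (Fin n) K :=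
  xArrow K L (block b (Fin.last (k + 1))) (block b 0)

lemma diffSingle_eq {k : ℕ} (b : CycB n (k + 1)) :
    diffSingle K L b =
      (∑ s : Fin (k + 1), Finsupp.single (mergeAdj b s) (coefA K L b s))
        - Finsupp.single (mergeCyc b) (coefC K L b) := rfl

lemma cycDiff_single {k : ℕ} (a : CycB n (k + 1)) (p : MvPolynomial (Fin n) K) :
    cycDiff K L k (Finsupp.single a p) = p • diffSingle K L a := by
  simp [cycDiff, Finsupp.lsum_single, LinearMap.toSpanSingleton_apply]

end Aux3

section Aux4

variable (K : Type*) [Field K] {n : ℕ} (L : Matrix (Fin n) (Fin n) ℤ)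

lemma fin_zero_mk {k : ℕ} : (0 : Fin (k+1)) = ⟨0, Nat.succ_pos k⟩ := rfl

lemma fin_last_mk {k : ℕ} : Fin.last k = ⟨k, Nat.lt_succ_self k⟩ := rfl

lemma T1_pair {m : ℕ} (b : CycB n (m+2)) (s : Fin (m+2)) (t : Fin (m+1))
    (h : t.val < s.val) :
    Finsupp.single (mergeAdj (mergeAdj b s) t)
        (coefA K L b s * coefA K L (mergeAdj b s) t)
      + Finsupp.single
          (mergeAdj (mergeAdj b ⟨t.val, by have := t.isLt; omega⟩)
            ⟨s.val - 1, by have := s.isLt; omega⟩)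
          (coefA K L b ⟨t.val, by have := t.isLt; omega⟩ *
            coefA K L (mergeAdj b ⟨t.val, by have := t.isLt; omega⟩)
              ⟨s.val - 1, by have := s.isLt; omega⟩) = 0 := by
  rw [mergeAdj_mergeAdj b s t h, ← Finsupp.single_add]
  have hpq : coefA K L b s * coefA K L (mergeAdj b s) t
      + coefA K L b ⟨t.val, by have := t.isLt; omega⟩ *
          coefA K L (mergeAdj b ⟨t.val, by have := t.isLt; omega⟩)
            ⟨s.val - 1, by have := s.isLt; omega⟩ = 0 := by
    obtain ⟨sv, hs⟩ := s
    obtain ⟨tv, ht⟩ := t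
    simp only [Fin.val_mk] at h
    unfold coefA
    simp only [Fin.castSucc_mk, Fin.succ_mk, Fin.val_mk]
    by_cases hc : tv + 1 < sv
    · -- disjoint merges
      have e1 : block (mergeAdj b ⟨sv, hs⟩) (⟨tv, by omega⟩ : Fin (m+2)) =
          block b ⟨tv, by omega⟩ :=
        block_mergeAdj_single _ _ _ _ (fun v => by
          rw [collapseAt_eq_iff]; simp only [Fin.ext_iff, Fin.val_mk, and_true, true_and] <;> omega)
      have e2 : block (mergeAdj b ⟨sv, hs⟩) (⟨tv + 1, by omega⟩ : Fin (m+2)) =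
          block b ⟨tv + 1, by omega⟩ :=
        block_mergeAdj_single _ _ _ _ (fun v => by
          rw [collapseAt_eq_iff]; simp only [Fin.ext_iff, Fin.val_mk, and_true, true_and] <;> omega)
      have e3 : block (mergeAdj b ⟨tv, by omega⟩) (⟨sv - 1, by omega⟩ : Fin (m+2)) =
          block b ⟨sv, by omega⟩ :=
        block_mergeAdj_single _ _ _ _ (fun v => by
          rw [collapseAt_eq_iff]; simp only [Fin.ext_iff, Fin.val_mk, and_true, true_and] <;> omega)
      have e4 : block (mergeAdj b ⟨tv, by omega⟩) (⟨sv - 1 + 1, by omega⟩ : Fin (m+2)) =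
          block b ⟨sv + 1, by omega⟩ :=
        block_mergeAdj_single _ _ _ _ (fun v => by
          rw [collapseAt_eq_iff]; simp only [Fin.ext_iff, Fin.val_mk, and_true, true_and] <;> omega)
      rw [e1, e2, e3, e4]
      obtain ⟨a, rfl⟩ : ∃ a, sv = a + 1 := ⟨sv - 1, by omega⟩
      simp only [Nat.add_sub_cancel]
      ring
    · -- adjacent triple: tv + 1 = sv
      obtain rfl : sv = tv + 1 := by omega
      have e1 : block (mergeAdj b ⟨tv + 1, hs⟩) (⟨tv, by omega⟩ : Fin (m+2)) =
          block b ⟨tv, by omega⟩ :=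
        block_mergeAdj_single _ _ _ _ (fun v => by
          rw [collapseAt_eq_iff]; simp only [Fin.ext_iff, Fin.val_mk, and_true, true_and] <;> omega)
      have e2 : block (mergeAdj b ⟨tv + 1, hs⟩) (⟨tv + 1, by omega⟩ : Fin (m+2)) =
          block b ⟨tv + 1, by omega⟩ ∪ block b ⟨tv + 2, by omega⟩ :=
        block_mergeAdj_pair _ _ _ _ _ (fun v => by
          rw [collapseAt_eq_iff]; simp only [Fin.ext_iff, Fin.val_mk, and_true, true_and] <;> omega)
      have e3 : block (mergeAdj b ⟨tv, by omega⟩) (⟨tv + 1 - 1, by omega⟩ : Fin (m+2)) =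
          block b ⟨tv, by omega⟩ ∪ block b ⟨tv + 1, by omega⟩ :=
        block_mergeAdj_pair _ _ _ _ _ (fun v => by
          rw [collapseAt_eq_iff]; simp only [Fin.ext_iff, Fin.val_mk, and_true, true_and] <;> omega)
      have e4 : block (mergeAdj b ⟨tv, by omega⟩) (⟨tv + 1 - 1 + 1, by omega⟩ : Fin (m+2)) =
          block b ⟨tv + 2, by omega⟩ :=
        block_mergeAdj_single _ _ _ _ (fun v => by
          rw [collapseAt_eq_iff]; simp only [Fin.ext_iff, Fin.val_mk, and_true, true_and] <;> omega)
      rw [e1, e2, e3, e4,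
        xArrow_union_right K L (block_disjoint b (by simp [Fin.ext_iff])),
        xArrow_union_left K L (block_disjoint b (by simp [Fin.ext_iff]))]
      simp only [Nat.add_sub_cancel]
      ring
  rw [hpq, Finsupp.single_zero]

end Aux4

section Aux5

variable (K : Type*) [Field K] {n : ℕ} (L : Matrix (Fin n) (Fin n) ℤ)

lemma T3_T2 {m : ℕ} (b : CycB n (m+2)) (t : Fin (m+1)) :
    Finsupp.single (mergeAdj (mergeCyc b) t)
        (coefC K L b * coefA K L (mergeCyc b) t)
      + Finsupp.single (mergeCyc (mergeAdj b t.succ))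
          (coefA K L b t.succ * coefC K L (mergeAdj b t.succ)) = 0 := by
  rw [mergeCyc_mergeAdj b t.succ (by simp)]
  simp only [Fin.val_succ, Nat.add_sub_cancel, Fin.eta]
  rw [← Finsupp.single_add]
  have hpq : coefC K L b * coefA K L (mergeCyc b) t
      + coefA K L b t.succ * coefC K L (mergeAdj b t.succ) = 0 := by
    obtain ⟨tv, ht⟩ := t
    unfold coefA coefC
    simp only [Fin.castSucc_mk, Fin.succ_mk, Fin.val_mk, fin_last_mk, fin_zero_mk]
    by_cases hc : tv < m
    · have e1 : block (mergeCyc b) (⟨tv, by omega⟩ : Fin (m+2)) =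
          block b ⟨tv + 1, by omega⟩ :=
        block_mergeCyc_single _ _ _ (fun v => by
          rw [collapseCyc_eq_iff]; simp only [Fin.ext_iff, Fin.val_mk, and_true, true_and] <;> omega)
      have e2 : block (mergeCyc b) (⟨tv + 1, by omega⟩ : Fin (m+2)) =
          block b ⟨tv + 2, by omega⟩ :=
        block_mergeCyc_single _ _ _ (fun v => by
          rw [collapseCyc_eq_iff]; simp only [Fin.ext_iff, Fin.val_mk, and_true, true_and] <;> omega)
      have e3 : block (mergeAdj b ⟨tv + 1, by omega⟩) (⟨m + 1, by omega⟩ : Fin (m+2)) =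
          block b ⟨m + 2, by omega⟩ :=
        block_mergeAdj_single _ _ _ _ (fun v => by
          rw [collapseAt_eq_iff]; simp only [Fin.ext_iff, Fin.val_mk, and_true, true_and] <;> omega)
      have e4 : block (mergeAdj b ⟨tv + 1, by omega⟩) (⟨0, by omega⟩ : Fin (m+2)) =
          block b ⟨0, by omega⟩ :=
        block_mergeAdj_single _ _ _ _ (fun v => by
          rw [collapseAt_eq_iff]; simp only [Fin.ext_iff, Fin.val_mk, and_true, true_and] <;> omega)
      rw [e1, e2, e3, e4]
      ring
    · obtain rfl : m = tv := by omega
      have e1 : block (mergeCyc b) (⟨m, by omega⟩ : Fin (m+2)) =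
          block b ⟨m + 1, by omega⟩ :=
        block_mergeCyc_single _ _ _ (fun v => by
          rw [collapseCyc_eq_iff]; simp only [Fin.ext_iff, Fin.val_mk, and_true, true_and] <;> omega)
      have e2 : block (mergeCyc b) (⟨m + 1, by omega⟩ : Fin (m+2)) =
          block b ⟨0, by omega⟩ ∪ block b ⟨m + 2, by omega⟩ :=
        block_mergeCyc_pair _ _ _ _ (fun v => by
          rw [collapseCyc_eq_iff]; simp only [Fin.ext_iff, Fin.val_mk, and_true, true_and] <;> omega)
      have e3 : block (mergeAdj b ⟨m + 1, by omega⟩) (⟨m + 1, by omega⟩ : Fin (m+2)) =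
          block b ⟨m + 1, by omega⟩ ∪ block b ⟨m + 2, by omega⟩ :=
        block_mergeAdj_pair _ _ _ _ _ (fun v => by
          rw [collapseAt_eq_iff]; simp only [Fin.ext_iff, Fin.val_mk, and_true, true_and] <;> omega)
      have e4 : block (mergeAdj b ⟨m + 1, by omega⟩) (⟨0, by omega⟩ : Fin (m+2)) =
          block b ⟨0, by omega⟩ :=
        block_mergeAdj_single _ _ _ _ (fun v => by
          rw [collapseAt_eq_iff]; simp only [Fin.ext_iff, Fin.val_mk, and_true, true_and] <;> omega)
      rw [e1, e2, e3, e4,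
        xArrow_union_right K L (block_disjoint b (by simp [Fin.ext_iff])),
        xArrow_union_left K L (block_disjoint b (by simp [Fin.ext_iff]))]
      ring
  rw [hpq, Finsupp.single_zero]

lemma T4_T2 {m : ℕ} (b : CycB n (m+2)) :
    Finsupp.single (mergeCyc (mergeCyc b))
        (coefC K L b * coefC K L (mergeCyc b))
      = Finsupp.single (mergeCyc (mergeAdj b (0 : Fin (m+2))))
          (coefA K L b 0 * coefC K L (mergeAdj b 0)) := by
  rw [mergeCyc_mergeAdj_zero]
  congr 1
  unfold coefA coefC
  simp only [fin_last_mk, fin_zero_mk, Fin.castSucc_mk, Fin.succ_mk, Fin.val_mk]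
  have e1 : block (mergeCyc b) (⟨m + 1, by omega⟩ : Fin (m+2)) =
      block b ⟨0, by omega⟩ ∪ block b ⟨m + 2, by omega⟩ :=
    block_mergeCyc_pair _ _ _ _ (fun v => by
      rw [collapseCyc_eq_iff]; simp only [Fin.ext_iff, Fin.val_mk, and_true, true_and] <;> omega)
  have e2 : block (mergeCyc b) (⟨0, by omega⟩ : Fin (m+2)) =
      block b ⟨1, by omega⟩ :=
    block_mergeCyc_single _ _ _ (fun v => by
      rw [collapseCyc_eq_iff]; simp only [Fin.ext_iff, Fin.val_mk, and_true, true_and] <;> omega)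
  have e3 : block (mergeAdj b ⟨0, by omega⟩) (⟨m + 1, by omega⟩ : Fin (m+2)) =
      block b ⟨m + 2, by omega⟩ :=
    block_mergeAdj_single _ _ _ _ (fun v => by
      rw [collapseAt_eq_iff]; simp only [Fin.ext_iff, Fin.val_mk, and_true, true_and] <;> omega)
  have e4 : block (mergeAdj b ⟨0, by omega⟩) (⟨0, by omega⟩ : Fin (m+2)) =
      block b ⟨0, by omega⟩ ∪ block b ⟨1, by omega⟩ :=
    block_mergeAdj_pair _ _ _ _ _ (fun v => by
      rw [collapseAt_eq_iff]; simp only [Fin.ext_iff, Fin.val_mk, and_true, true_and] <;> omega)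
  rw [e1, e2, e3, e4,
    xArrow_union_left K L (block_disjoint b (by simp [Fin.ext_iff])),
    xArrow_union_right K L (block_disjoint b (by simp [Fin.ext_iff]))]
  ring

end Aux5

section Aux6

variable (K : Type*) [Field K] {n : ℕ} (L : Matrix (Fin n) (Fin n) ℤ)

lemma sum_T1_zero {m : ℕ} (b : CycB n (m+2)) :
    ∑ s : Fin (m+2), ∑ t : Fin (m+1),
      Finsupp.single (mergeAdj (mergeAdj b s) t)
        (coefA K L b s * coefA K L (mergeAdj b s) t) = 0 := by
  rw [← Finset.sum_product']
  refine Finset.sum_ninvolution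
    (fun p => if h : p.2.val < p.1.val then
        (⟨p.2.val, by have := p.2.isLt; omega⟩, ⟨p.1.val - 1, by have := p.1.isLt; omega⟩)
      else
        (⟨p.2.val + 1, by have := p.2.isLt; omega⟩,
          ⟨p.1.val, by have := p.2.isLt; omega⟩))
    ?_ ?_ (fun p => by simp) ?_
  · rintro ⟨s, t⟩
    dsimp only
    by_cases h' : t.val < s.val
    · rw [dif_pos h']
      exact T1_pair K L b s t h'
    · rw [dif_neg h']
      have hst : (⟨s.val, by have := s.isLt; have := t.isLt; omega⟩ : Fin (m+1)).val <
          (⟨t.val + 1, by have := t.isLt; omega⟩ : Fin (m+2)).val := by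
        simp only [Fin.val_mk]; omega
      have h2 := T1_pair K L b ⟨t.val + 1, by have := t.isLt; omega⟩
        ⟨s.val, by have := s.isLt; have := t.isLt; omega⟩ hst
      exact (add_comm _ _).trans h2
  · rintro ⟨s, t⟩ -
    dsimp only
    by_cases h' : t.val < s.val
    · rw [dif_pos h']
      simp only [ne_eq, Prod.mk.injEq, Fin.ext_iff, Fin.val_mk, not_and, and_true, true_and]
      omega
    · rw [dif_neg h']
      simp only [ne_eq, Prod.mk.injEq, Fin.ext_iff, Fin.val_mk, not_and, and_true, true_and]
      omega
  · rintro ⟨s, t⟩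
    dsimp only
    have hs := s.isLt
    have ht := t.isLt
    by_cases h' : t.val < s.val
    · rw [dif_pos h', dif_neg (by simp only [Fin.val_mk]; omega)]
      simp only [Prod.ext_iff, Fin.ext_iff, Fin.val_mk, and_true, true_and]
      omega
    · rw [dif_neg h', dif_pos (by simp only [Fin.val_mk]; omega)]
      simp only [Prod.ext_iff, Fin.ext_iff, Fin.val_mk, and_true, true_and]
      omega

lemma key {m : ℕ} (b : CycB n (m+2)) :
    cycDiff K L m (diffSingle K L b) = 0 := by
  rw [diffSingle_eq, map_sub, map_sum]
  simp only [cycDiff_single, diffSingle_eq, smul_sub, Finset.smul_sum,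
    Finsupp.smul_single, smul_eq_mul]
  rw [Finset.sum_sub_distrib, sum_T1_zero K L b]
  rw [Fin.sum_univ_succ (fun s : Fin (m+2) =>
    Finsupp.single (mergeCyc (mergeAdj b s)) (coefA K L b s * coefC K L (mergeAdj b s)))]
  rw [show (∑ t : Fin (m+1),
      Finsupp.single (mergeAdj (mergeCyc b) t) (coefC K L b * coefA K L (mergeCyc b) t))
      = ∑ t : Fin (m+1), -Finsupp.single (mergeCyc (mergeAdj b t.succ))
          (coefA K L b t.succ * coefC K L (mergeAdj b t.succ)) from
    Finset.sum_congr rfl fun t _ => eq_neg_of_add_eq_zero_left (T3_T2 K L b t)]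
  rw [T4_T2 K L b]
  simp only [Finset.sum_neg_distrib]
  abel

end Aux6

/-- For a CB matrix `L` and a field `K`, the Cyc sequence is a chain
complex of free `K[x]`-modules: `∂_{k-1} ∘ ∂_k = 0` for every `k` with
`2 ≤ k ≤ n - 1`.  (Here `cycDiff K L j` is the differential `∂_{j+1}`, so with
`k = j + 2` the condition reads as below.) -/
theorem cyc_is_chain_complex (n : ℕ) (hn : 3 ≤ n)
    (L : Matrix (Fin n) (Fin n) ℤ) (hL : IsCB n L)
    (K : Type*) [Field K] :
    ∀ j : ℕ, j + 2 ≤ n - 1 →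
      (cycDiff K (n := n) L j).comp (cycDiff K L (j + 1)) = 0 := by
  intro j _
  apply Finsupp.lhom_ext
  intro a p
  rw [LinearMap.comp_apply, cycDiff_single, map_smul, key K L a, smul_zero,
    LinearMap.zero_apply]
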